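/- If G and H are formal power series with zero constant terms and F = G ∘ H is their composition, then the composita multiply: [x^n]F^k = ∑_{m=k}^{n} ([x^m]G^k)·([x^n]H^m) for all n ≥ k ≥ 1. -/

import Mathlib

open PowerSeries Finset

/-- Substitution of `H` (with zero constant term) into `G`: the composition `G(H(x))`. -/
noncomputable def pcomp {R : Type*} [CommRing R] (G H : PowerSeries R) : PowerSeries R :=
  PowerSeries.mk fun n => ∑ m ∈ range (n + 1), coeff m G * coeff n (H ^ m)

lemma aux_vanish {R : Type*} [CommRing R] {H : PowerSeries R}
    (hH0 : constantCoeff H = 0) {m n : ℕ} (h : n < m) : coeff n (H ^ m) = 0 := by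
  have hX : (X : PowerSeries R) ∣ H := X_dvd_iff.mpr hH0
  exact (X_pow_dvd_iff.mp (pow_dvd_pow_of_dvd hX m)) n h

lemma pcomp_pow_coeff {R : Type*} [CommRing R] (G H : PowerSeries R)
    (hH0 : constantCoeff H = 0) (k n : ℕ) :
    coeff n ((pcomp G H) ^ k) =
      ∑ m ∈ range (n + 1), coeff m (G ^ k) * coeff n (H ^ m) := by
  induction k generalizing n with
  | zero =>
    simp [coeff_one]
  | succ k ih =>
    set f : ℕ → ℕ → R := fun a b => coeff a (G ^ k) * coeff b G * coeff n (H ^ (a + b))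
      with hf
    set s : Finset (ℕ × ℕ) := range (n+1) ×ˢ range (n+1) with hs
    rw [pow_succ, coeff_mul]
    have hL : ∀ p ∈ antidiagonal n,
        coeff p.1 ((pcomp G H) ^ k) * coeff p.2 (pcomp G H) =
        ∑ a ∈ range (n+1), ∑ b ∈ range (n+1),
          (coeff a (G ^ k) * coeff p.1 (H ^ a)) * (coeff b G * coeff p.2 (H ^ b)) := by
      intro p hp
      rw [HasAntidiagonal.mem_antidiagonal] at hp
      have h1 : coeff p.1 ((pcomp G H) ^ k) =
          ∑ a ∈ range (n+1), coeff a (G ^ k) * coeff p.1 (H ^ a) := by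
        rw [ih p.1]
        apply sum_subset
        · intro a ha; rw [mem_range] at *; omega
        · intro a _ ha
          rw [mem_range] at ha
          rw [aux_vanish hH0 (by omega), mul_zero]
      have h2 : coeff p.2 (pcomp G H) =
          ∑ b ∈ range (n+1), coeff b G * coeff p.2 (H ^ b) := by
        rw [show coeff p.2 (pcomp G H) = ∑ b ∈ range (p.2+1), coeff b G * coeff p.2 (H ^ b)
              from coeff_mk _ _]
        apply sum_subset
        · intro a ha; rw [mem_range] at *; omega
        · intro a _ ha
          rw [mem_range] at ha
          rw [aux_vanish hH0 (by omega), mul_zero]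
      rw [h1, h2, sum_mul_sum]
    rw [sum_congr rfl hL, sum_comm]
    rw [sum_congr rfl fun a _ => Finset.sum_comm (s := antidiagonal n)]
    have hstep : ∀ a ∈ range (n+1), ∀ b ∈ range (n+1),
        (∑ p ∈ antidiagonal n,
          (coeff a (G ^ k) * coeff p.1 (H ^ a)) * (coeff b G * coeff p.2 (H ^ b)))
        = f a b := by
      intro a _ b _
      rw [hf]
      simp only
      rw [pow_add, coeff_mul, mul_sum]
      exact sum_congr rfl fun p _ => by ring
    rw [sum_congr rfl fun a ha => sum_congr rfl fun b hb => hstep a ha b hb]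
    rw [← Finset.sum_product']
    -- RHS
    have hR : ∀ m ∈ range (n+1), coeff m (G ^ (k+1)) * coeff n (H ^ m)
        = ∑ p ∈ antidiagonal m, f p.1 p.2 := by
      intro m _
      rw [pow_succ, coeff_mul, sum_mul]
      refine sum_congr rfl fun p hp => ?_
      rw [HasAntidiagonal.mem_antidiagonal] at hp
      rw [hf]; simp only; rw [hp]
    rw [sum_congr rfl hR]
    have hdisj : (↑(range (n+1)) : Set ℕ).PairwiseDisjoint antidiagonal := by
      intro i _ j _ hij
      rw [Function.onFun, Finset.disjoint_left]
      intro p hpi hpj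
      rw [HasAntidiagonal.mem_antidiagonal] at hpi hpj
      omega
    rw [← Finset.sum_biUnion hdisj]
    refine (Finset.sum_subset ?_ ?_).symm
    · intro p hp
      simp only [Finset.mem_biUnion, mem_range, HasAntidiagonal.mem_antidiagonal] at hp
      obtain ⟨m, hm, hpm⟩ := hp
      rw [mem_product, mem_range, mem_range]
      omega
    · intro p hps hpb
      rw [mem_product, mem_range, mem_range] at hps
      have hgt : n < p.1 + p.2 := by
        by_contra h
        push_neg at h
        exact hpb (Finset.mem_biUnion.mpr ⟨p.1 + p.2, mem_range.mpr (by omega),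
          mem_antidiagonal.mpr rfl⟩)
      rw [aux_vanish hH0 hgt, mul_zero]

theorem stmt_19 {R : Type*} [CommRing R] (G H : PowerSeries R)
    (hG0 : constantCoeff G = 0) (hH0 : constantCoeff H = 0)
    (F : PowerSeries R) (hF : F = pcomp G H)
    (n k : ℕ) (hk : 1 ≤ k) (hkn : k ≤ n) :
    coeff n (F ^ k) = ∑ m ∈ Icc k n, coeff m (G ^ k) * coeff n (H ^ m) := by
  rw [hF, pcomp_pow_coeff G H hH0 k n]
  symm
  apply Finset.sum_subset
  · intro m hm; rw [mem_Icc] at hm; rw [mem_range]; omega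
  · intro m hm hm'
    rw [mem_range] at hm
    rw [mem_Icc] at hm'
    have : m < k := by omega
    rw [aux_vanish hG0 this, zero_mul]
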